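/- Let d ∈ ℤ^n be a sequence with maximum entry Δ and Σ_v d_v = nd̄ ≡ 0 (mod k). If there exists an integer p with Δ ≤ binom(p−1, k−1) and nd̄ ≥ (Δ−1)p + 1, then (assuming this criterion, stated as a hypothesis) the following holds: if 20k < n, Δ ≤ (1 + 1/(3k))·d̄ ≤ (1/4)·binom(n−1,k−1), and d̄ ≥ 1, then there exists a k-uniform hypergraph on [n] with degree sequence d. -/

import Mathlib

open Finset

lemma choose_pred_identity (a r : ℕ) (h : r ≤ a) :
    (a : ℚ) * (((a - 1).choose r : ℕ) : ℚ) = ((a : ℚ) - r) * (a.choose r : ℚ) := by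
  match a, h with
  | 0, h =>
    interval_cases r
    simp
  | b+1, h =>
    match r with
    | 0 => simp
    | j+1 =>
      have hj : j ≤ b := by omega
      have pascal : ((b+1).choose (j+1) : ℚ) = (b.choose j : ℚ) + (b.choose (j+1) : ℚ) := by
        exact_mod_cast congrArg (Nat.cast (R := ℚ)) (Nat.choose_succ_succ b j)
      have hsm : ((b:ℚ)+1) * (b.choose j : ℚ) = ((b+1).choose (j+1) : ℚ) * ((j:ℚ)+1) := by
        exact_mod_cast congrArg (Nat.cast (R := ℚ)) (Nat.add_one_mul_choose_eq b j)
      have hred : (b + 1 - 1 : ℕ) = b := rfl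
      rw [hred]
      push_cast
      linear_combination (-(b:ℚ)-1) * pascal - hsm

lemma choose_sub_le (t r : ℕ) : ∀ s, r + s ≤ t →
    (t.choose r : ℚ) - ((t - s).choose r : ℚ) ≤ ((s : ℚ) * r) / ((t:ℚ) - s) * (t.choose r) := by
  intro s
  induction s with
  | zero => intro h; simp
  | succ s ih =>
    intro h
    have h' : r + s ≤ t := by omega
    have IH := ih h'
    rcases Nat.eq_zero_or_pos r with hr | hr
    · subst hr; simp
    have hts : (r : ℚ) + s + 1 ≤ t := by exact_mod_cast h
    have hr1 : (1:ℚ) ≤ (r:ℚ) := by exact_mod_cast hr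
    have htspos : (0:ℚ) < (t:ℚ) - s := by linarith
    have htspos' : (0:ℚ) < (t:ℚ) - s - 1 := by linarith
    have ha : r ≤ t - s := by omega
    have hid := choose_pred_identity (t - s) r ha
    have hcast : ((t - s : ℕ) : ℚ) = (t:ℚ) - s := by
      have hst : s ≤ t := by omega
      push_cast [hst]; ring
    have hcast2 : (t - (s+1) : ℕ) = (t - s) - 1 := by omega
    rw [hcast] at hid
    have hmono : ((t - s).choose r : ℚ) ≤ (t.choose r : ℚ) := by
      exact_mod_cast Nat.choose_le_choose r (Nat.sub_le t s)
    have hnn : (0:ℚ) ≤ (t.choose r : ℚ) := by positivity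
    have hstep : ((t - s).choose r : ℚ) - (((t - s) - 1).choose r : ℚ)
        = (r : ℚ) / ((t:ℚ) - s) * ((t - s).choose r : ℚ) := by
      field_simp
      linarith [hid]
    rw [hcast2]
    have hb1 : (r : ℚ) / ((t:ℚ) - s) * ((t - s).choose r : ℚ)
        ≤ (r : ℚ) / ((t:ℚ) - s) * (t.choose r : ℚ) := by
      apply mul_le_mul_of_nonneg_left hmono
      positivity
    have hfrac : ((s:ℚ) * r + r) / ((t:ℚ) - s) ≤ (((s:ℚ)+1) * r) / ((t:ℚ) - (s+1)) := by
      have he : (((s:ℚ)+1) * r) = (s:ℚ)*r + r := by ring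
      rw [he]
      apply div_le_div_of_nonneg_left (by positivity) htspos' (by linarith) |>.trans_eq
      ring_nf
    have hfinal := mul_le_mul_of_nonneg_right hfrac hnn
    have hsum : ((s:ℚ)*r)/((t:ℚ)-s) * (t.choose r : ℚ) + (r:ℚ)/((t:ℚ)-s) * (t.choose r : ℚ)
        = (((s:ℚ)*r + r)/((t:ℚ)-s)) * (t.choose r : ℚ) := by ring
    push_cast
    push_cast at IH hstep hb1 hfinal hsum
    linarith [IH, hstep, hb1, hfinal, hsum]


/-- `d` is `k`-graphical: some `k`-uniform hypergraph on `[n]` has degree sequence `d`. -/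
def IsKGraphical (n k : ℕ) (d : Fin n → ℤ) : Prop :=
  ∃ H : Finset (Finset (Fin n)), (∀ e ∈ H, e.card = k) ∧
    ∀ v, ((H.filter (fun e => v ∈ e)).card : ℤ) = d v

set_option maxHeartbeats 1000000 in
/-- assuming the Behrens–Erdős–Frankl type criterion (as a hypothesis),
if `20k < n`, `Δ ≤ (1+1/(3k))·d̄ ≤ (1/4)·binom(n−1,k−1)` and `d̄ ≥ 1`, then `d` is
`k`-graphical. -/
theorem stmt4 (n k : ℕ) (d : Fin n → ℤ) (Δ : ℤ) (dbar : ℚ)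
    (hk : 1 ≤ k) (hn : 20 * k < n)
    (hΔ : IsGreatest (Set.range d) Δ)
    (havg : ((∑ v, d v : ℤ) : ℚ) = (n : ℚ) * dbar)
    (hdvd : (k : ℤ) ∣ ∑ v, d v)
    (hcrit : (∃ p : ℕ, (Δ : ℚ) ≤ ((p - 1).choose (k - 1) : ℚ) ∧
        ((Δ : ℚ) - 1) * (p : ℚ) + 1 ≤ (n : ℚ) * dbar) → IsKGraphical n k d)
    (h1 : (Δ : ℚ) ≤ (1 + 1 / (3 * (k : ℚ))) * dbar)
    (h2 : (1 + 1 / (3 * (k : ℚ))) * dbar ≤ (1 / 4) * ((n - 1).choose (k - 1) : ℚ))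
    (h3 : 1 ≤ dbar) :
    IsKGraphical n k d := by
  have hn0 : 0 < n := by omega
  -- Δ ≥ dbar ≥ 1
  have hub : ∀ v, d v ≤ Δ := fun v => hΔ.2 ⟨v, rfl⟩
  have hsum_le : (∑ v, d v) ≤ n * Δ := by
    calc (∑ v, d v) ≤ ∑ _v : Fin n, Δ := Finset.sum_le_sum (fun v _ => hub v)
    _ = n * Δ := by simp [Finset.sum_const, Finset.card_univ, mul_comm]
  have hdbar_le : dbar ≤ (Δ:ℚ) := by
    have hle : (n:ℚ) * dbar ≤ (n:ℚ) * (Δ:ℚ) := by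
      rw [← havg]; exact_mod_cast hsum_le
    have hn0Q : (0:ℚ) < n := by exact_mod_cast hn0
    exact le_of_mul_le_mul_left hle hn0Q
  have hΔ1 : (1:ℚ) ≤ (Δ:ℚ) := le_trans h3 hdbar_le
  -- choose m and p
  set m : ℕ := n / (3*k+1) + 1 with hm
  have hdm := Nat.div_add_mod n (3*k+1)
  have hmod : n % (3*k+1) < 3*k+1 := Nat.mod_lt _ (by omega)
  have hmsplit : (3*k+1)*m = (3*k+1)*(n/(3*k+1)) + (3*k+1) := by rw [hm]; ring
  have hml : n < (3*k+1)*m := by omega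
  have hmu : (3*k+1)*m ≤ n + 3*k + 1 := by omega
  have h4m : 4*m ≤ (3*k+1)*m := Nat.mul_le_mul_right m (by omega)
  have h4m' : 4*m ≤ n + 3*k+1 := le_trans h4m hmu
  have hmk : m + k + 1 ≤ n := by omega
  obtain ⟨k', rfl⟩ : ∃ k', k = k' + 1 := ⟨k - 1, by omega⟩
  rw [show 3*(k'+1)+1 = 3*k'+4 from by ring] at hml hmu
  -- key numeric bound
  have hkey : 4*m*k' + 3*m + 3 ≤ 3*n := by
    have hA : (4*k'+3) * ((3*k'+4)*m) ≤ (4*k'+3) * (n+3*k'+4) := by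
      apply Nat.mul_le_mul_left
      omega
    have hB : 5*k'*(20*k'+21) ≤ 5*k'*n := Nat.mul_le_mul_left _ (by omega)
    nlinarith [hA, hB, hn]
  set p : ℕ := n - m with hp
  apply hcrit
  refine ⟨p, ?_, ?_⟩
  · -- Δ ≤ C(p-1, k-1)
    have hΔ4 : (Δ:ℚ) ≤ (1/4) * (((n-1).choose k' : ℕ) : ℚ) := by
      have := h1.trans h2
      simpa using this
    have hsub := choose_sub_le (n-1) k' m (by omega)
    have hden : (0:ℚ) < ((n-1:ℕ):ℚ) - m := by
      have h' : (m:ℚ) < ((n-1:ℕ):ℚ) := by exact_mod_cast (show m < n - 1 by omega)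
      linarith
    have hfrac : ((m:ℚ) * k') / (((n-1:ℕ):ℚ) - m) ≤ 3/4 := by
      rw [div_le_iff₀ hden]
      have h4 : (4*m*k' + 3*m + 3 : ℚ) ≤ 3*(n:ℚ) := by exact_mod_cast hkey
      have hcc : ((n-1:ℕ):ℚ) = (n:ℚ) - 1 := by
        have h1n : 1 ≤ n := by omega
        push_cast [h1n]; ring
      rw [hcc]
      nlinarith [h4]
    have hnnC : (0:ℚ) ≤ (((n-1).choose k' : ℕ) : ℚ) := by positivity
    have hC : (1/4) * (((n-1).choose k' : ℕ) : ℚ) ≤ ((n - 1 - m).choose k' : ℚ) := by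
      nlinarith [hsub, mul_le_mul_of_nonneg_right hfrac hnnC]
    have hpe : p - 1 = n - 1 - m := by omega
    have hke : k' + 1 - 1 = k' := rfl
    rw [hpe, hke]
    linarith [hΔ4, hC]
  · -- (Δ-1) p + 1 ≤ n dbar
    have hdbar_ge : (3*(k':ℚ)+3) * (Δ:ℚ) ≤ (3*(k':ℚ)+4) * dbar := by
      have h1' : (Δ:ℚ) ≤ (1 + 1/(3*((k':ℚ)+1))) * dbar := by push_cast at h1 ⊢; exact h1
      rw [show (1:ℚ) + 1/(3*((k':ℚ)+1)) = (3*(k':ℚ)+4)/(3*((k':ℚ)+1)) from by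
        field_simp; ring] at h1'
      rw [div_mul_eq_mul_div, le_div_iff₀ (by positivity)] at h1'
      nlinarith [h1']
    have hpQ : (p:ℚ) = (n:ℚ) - m := by
      have hmn : m ≤ n := by omega
      push_cast [hp, hmn]; ring
    have hmlQ : (n:ℚ) + 1 ≤ (3*(k':ℚ)+4) * m := by exact_mod_cast (show n + 1 ≤ (3*k'+4)*m from hml)
    have hmkQ : (m:ℚ) + 1 ≤ (n:ℚ) := by exact_mod_cast (show m + 1 ≤ n by omega)
    have hΔ0 : (0:ℚ) ≤ (Δ:ℚ) := by linarith
    have hnd2 : ((n:ℚ)+1) * Δ ≤ ((3*(k':ℚ)+4)*m) * Δ := mul_le_mul_of_nonneg_right hmlQ hΔ0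
    have hnm0 : (0:ℚ) ≤ (3*(k':ℚ)+4) * ((n:ℚ) - m - 1) := by
      apply mul_nonneg (by positivity)
      linarith [hmkQ]
    have hnQ0 : (0:ℚ) ≤ (n:ℚ) := by positivity
    have hnd3 : (n:ℚ)*((3*(k':ℚ)+3)*Δ) ≤ (3*(k':ℚ)+4) * ((n:ℚ)*dbar) := by
      have := mul_le_mul_of_nonneg_left hdbar_ge hnQ0
      nlinarith [this]
    have hmid : (3*(k':ℚ)+4) * (((Δ:ℚ)-1)*((n:ℚ)-m)+1) ≤ (n:ℚ)*((3*(k':ℚ)+3)*Δ) := by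
      nlinarith [hnd2, hnm0, hΔ1]
    have K4 : (0:ℚ) < 3*(k':ℚ)+4 := by positivity
    have hfin := (mul_le_mul_iff_right₀ K4).mp (hmid.trans hnd3)
    push_cast
    rw [hpQ]
    exact hfin
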